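/- Fix nonzero integers h, k with gcd(h, h+k) = 1 and gcd(k, h+k) = 1, and for u ∈ (0,1) let γ_u(t) = (2/π)·( (u√(1−u²)/(h+k))·sin((h+k)πt), −(u/k)·cos(kπt) + (√(1−u²)/h)·cos(hπt), (u/k)·sin(kπt) + (√(1−u²)/h)·sin(hπt) ). If there exist t₀, t₁ with 0 ≤ t₀ < t₁ < 2 and γ_u(t₀) = γ_u(t₁), then u = √(k²/(h²+k²)). (The base curve γ_u is nonembedded for exactly one parameter value u in (0,1).) -/

import Mathlib

noncomputable section

/-- The explicit curve `γ_u` of the one-parameter family of critical framed curves,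
for parameters `h, k` and `u ∈ [0,1]`. -/
def gammaU (h k : ℤ) (u : ℝ) (t : ℝ) : EuclideanSpace ℝ (Fin 3) :=
  WithLp.toLp 2 ![(2 / Real.pi) * (u * Real.sqrt (1 - u ^ 2) / ((h : ℝ) + (k : ℝ)) *
      Real.sin (((h : ℝ) + (k : ℝ)) * Real.pi * t)),
    (2 / Real.pi) * (-(u / (k : ℝ)) * Real.cos ((k : ℝ) * Real.pi * t) +
      Real.sqrt (1 - u ^ 2) / (h : ℝ) * Real.cos ((h : ℝ) * Real.pi * t)),
    (2 / Real.pi) * ((u / (k : ℝ)) * Real.sin ((k : ℝ) * Real.pi * t) +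
      Real.sqrt (1 - u ^ 2) / (h : ℝ) * Real.sin ((h : ℝ) * Real.pi * t))]

/-- Within the one-parameter family of critical framed curves, the base curve `γ_u` is
nonembedded for exactly one parameter value: if `gcd(h, h+k) = gcd(k, h+k) = 1` and
`γ_u` has a self-intersection on `[0,2)`, then `u = √(k²/(h²+k²))`. -/
theorem gammaU_nonembedded_value
    (h k : ℤ) (hh : h ≠ 0) (hk : k ≠ 0) (hhk : h + k ≠ 0)
    (hg₁ : Int.gcd h (h + k) = 1) (hg₂ : Int.gcd k (h + k) = 1)
    (u : ℝ) (hu : u ∈ Set.Ioo (0 : ℝ) 1)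
    (t₀ t₁ : ℝ) (ht₀ : 0 ≤ t₀) (ht : t₀ < t₁) (ht₁ : t₁ < 2)
    (hself : gammaU h k u t₀ = gammaU h k u t₁) :
    u = Real.sqrt ((k : ℝ) ^ 2 / ((h : ℝ) ^ 2 + (k : ℝ) ^ 2)) := by

  obtain ⟨hu0, hu1⟩ := hu
  have hπ : (0:ℝ) < Real.pi := Real.pi_pos
  have hv2 : Real.sqrt (1 - u ^ 2) ^ 2 = 1 - u ^ 2 := Real.sq_sqrt (by nlinarith)
  have hv0 : 0 < Real.sqrt (1 - u ^ 2) := Real.sqrt_pos.mpr (by nlinarith)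
  set v := Real.sqrt (1 - u ^ 2) with hv
  have hhR : (h:ℝ) ≠ 0 := Int.cast_ne_zero.mpr hh
  have hkR : (k:ℝ) ≠ 0 := Int.cast_ne_zero.mpr hk
  have hhkR : (h:ℝ) + (k:ℝ) ≠ 0 := by
    have h' : ((h+k : ℤ):ℝ) ≠ 0 := Int.cast_ne_zero.mpr hhk
    push_cast at h'; exact h'
  have h2π : (2/Real.pi : ℝ) ≠ 0 := by positivity
  set s : ℝ := (t₀ + t₁)/2 with hs
  set d : ℝ := (t₁ - t₀)/2 with hdd
  have hd0 : 0 < d := by rw [hdd]; linarith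
  have hd1 : d < 1 := by rw [hdd]; linarith
  set x := (k:ℝ)*Real.pi*s with hx
  set y := (k:ℝ)*Real.pi*d with hy
  set X := (h:ℝ)*Real.pi*s with hX
  set Y := (h:ℝ)*Real.pi*d with hY
  -- extract components
  have e0 := congrArg (fun w => w 0) hself
  have e1 := congrArg (fun w => w 1) hself
  have e2 := congrArg (fun w => w 2) hself
  simp only [gammaU, PiLp.toLp_apply, Matrix.cons_val_zero, Matrix.cons_val_one, Matrix.head_cons,
    Matrix.cons_val_two, Matrix.tail_cons] at e0 e1 e2
  replace e0 := mul_left_cancel₀ h2π e0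
  replace e1 := mul_left_cancel₀ h2π e1
  replace e2 := mul_left_cancel₀ h2π e2
  rw [show ((h:ℝ) + (k:ℝ)) * Real.pi * t₀ = (x+X) - (y+Y) by
        rw [hx, hy, hX, hY, hs, hdd]; ring,
      show ((h:ℝ) + (k:ℝ)) * Real.pi * t₁ = (x+X) + (y+Y) by
        rw [hx, hy, hX, hY, hs, hdd]; ring] at e0
  rw [show (k:ℝ) * Real.pi * t₀ = x - y by rw [hx, hy, hs, hdd]; ring,
      show (k:ℝ) * Real.pi * t₁ = x + y by rw [hx, hy, hs, hdd]; ring,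
      show (h:ℝ) * Real.pi * t₀ = X - Y by rw [hX, hY, hs, hdd]; ring,
      show (h:ℝ) * Real.pi * t₁ = X + Y by rw [hX, hY, hs, hdd]; ring] at e1 e2
  -- first component: cos(x+X) * sin(y+Y) = 0
  replace e0 := mul_left_cancel₀
    (show u * v / ((h:ℝ) + (k:ℝ)) ≠ 0 from
      div_ne_zero (by positivity) hhkR) e0
  rw [Real.sin_sub (x+X) (y+Y), Real.sin_add (x+X) (y+Y)] at e0
  have hE0 : Real.cos (x+X) * Real.sin (y+Y) = 0 := by linarith
  -- second/third components
  rw [Real.cos_sub x y, Real.cos_add x y, Real.cos_sub X Y, Real.cos_add X Y] at e1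
  rw [Real.sin_sub x y, Real.sin_add x y, Real.sin_sub X Y, Real.sin_add X Y] at e2
  set A := u / (k:ℝ) * Real.sin y with hA
  set B := v / (h:ℝ) * Real.sin Y with hB
  have P1 : A * Real.sin x = B * Real.sin X := by
    rw [hA, hB]; linear_combination (-(1:ℝ)/2) * e1
  have P2 : A * Real.cos x = -(B * Real.cos X) := by
    rw [hA, hB]; linear_combination (-(1:ℝ)/2) * e2
  have pyx := Real.sin_sq_add_cos_sq x
  have pyX := Real.sin_sq_add_cos_sq X
  have pyyY := Real.sin_sq_add_cos_sq (y+Y)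
  have hABsq : A^2 = B^2 := by
    linear_combination (-A^2) * pyx + B^2 * pyX + (A * Real.sin x + B * Real.sin X) * P1 +
      (A * Real.cos x - B * Real.cos X) * P2
  have hACB : A * Real.cos (x+X) = -B := by
    rw [Real.cos_add]
    linear_combination Real.cos X * P2 - Real.sin X * P1 - B * pyX
  -- coprimality of h and k
  have hco : IsCoprime (h:ℤ) (k:ℤ) := by
    rw [Int.isCoprime_iff_gcd_eq_one]
    have d1 : (Int.gcd h k : ℤ) ∣ h := Int.gcd_dvd_left h k
    have d2 : (Int.gcd h k : ℤ) ∣ k := Int.gcd_dvd_right h k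
    have d3 : (Int.gcd h k : ℤ) ∣ (Int.gcd h (h+k) : ℤ) := by exact_mod_cast Int.dvd_gcd d1 (dvd_add d1 d2)
    have d4 : Int.gcd h k ∣ Int.gcd h (h+k) := Int.natCast_dvd_natCast.mp d3
    rw [hg₁] at d4
    exact Nat.dvd_one.mp d4
  -- sin y and sin Y cannot both vanish
  have key : ¬ (Real.sin y = 0 ∧ Real.sin Y = 0) := by
    rintro ⟨h1, h2⟩
    rw [Real.sin_eq_zero_iff] at h1 h2
    obtain ⟨n, hn⟩ := h1
    obtain ⟨m, hm⟩ := h2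
    have hn' : (n:ℝ) = (k:ℝ) * d := by
      have : (n:ℝ) * Real.pi = ((k:ℝ) * d) * Real.pi := by rw [hn, hy]; ring
      exact mul_right_cancel₀ (ne_of_gt hπ) this
    have hm' : (m:ℝ) = (h:ℝ) * d := by
      have : (m:ℝ) * Real.pi = ((h:ℝ) * d) * Real.pi := by rw [hm, hY]; ring
      exact mul_right_cancel₀ (ne_of_gt hπ) this
    have hmn : (h:ℤ) * n = k * m := by
      have : ((h * n : ℤ):ℝ) = ((k * m : ℤ):ℝ) := by push_cast; rw [hn', hm']; ring
      exact_mod_cast this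
    have hdm : (h:ℤ) ∣ m := hco.dvd_of_dvd_mul_left ⟨n, hmn.symm⟩
    obtain ⟨q, hq⟩ := hdm
    have hdq : d = (q:ℝ) := by
      have h1' : (h:ℝ) * d = (h:ℝ) * (q:ℝ) := by
        rw [← hm']; exact_mod_cast congrArg (fun z : ℤ => (z:ℝ)) hq
      exact mul_left_cancel₀ hhR h1'
    have hq0 : (0:ℝ) < (q:ℝ) := hdq ▸ hd0
    have hq1 : (q:ℝ) < 1 := hdq ▸ hd1
    have hq0' : 0 < q := by exact_mod_cast hq0
    have hq1' : q < 1 := by exact_mod_cast hq1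
    omega
  -- both sines are nonzero
  have hsy : Real.sin y ≠ 0 := by
    intro h0
    have hA0 : A = 0 := by rw [hA, h0]; ring
    have hB0 : B = 0 := by
      have : B^2 = 0 := by rw [← hABsq, hA0]; ring
      exact pow_eq_zero_iff (n := 2) (by norm_num) |>.mp this
    have hsY : Real.sin Y = 0 := by
      have := hB0
      rw [hB] at this
      rcases mul_eq_zero.mp this with h' | h'
      · exact absurd h' (div_ne_zero (ne_of_gt hv0) hhR)
      · exact h'
    exact key ⟨h0, hsY⟩
  have hA0 : A ≠ 0 := by
    rw [hA]
    exact mul_ne_zero (div_ne_zero (ne_of_gt hu0) hkR) hsy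
  have hB0 : B ≠ 0 := by
    intro h0
    have : A^2 = 0 := by rw [hABsq, h0]; ring
    exact hA0 (pow_eq_zero_iff (n := 2) (by norm_num) |>.mp this)
  -- sin(y+Y) = 0
  have hsyY : Real.sin (y+Y) = 0 := by
    rcases mul_eq_zero.mp hE0 with h' | h'
    · exfalso
      apply hB0
      have : A * Real.cos (x+X) = 0 := by rw [h']; ring
      rw [hACB] at this; linarith
    · exact h'
  have hc2 : Real.cos (y+Y)^2 = 1 := by
    have hz : Real.sin (y+Y)^2 = 0 := by rw [hsyY]; ring
    linarith
  -- sin Y = -cos(y+Y) * sin y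
  have hSY : Real.sin Y = -(Real.cos (y+Y) * Real.sin y) := by
    have h' := Real.sin_sub (y+Y) y
    rw [hsyY] at h'
    have h'' : (y+Y) - y = Y := by ring
    rw [h''] at h'
    rw [h']; ring
  have hsq : Real.sin Y ^ 2 = Real.sin y ^ 2 := by
    rw [hSY]
    calc (-(Real.cos (y+Y) * Real.sin y))^2 = Real.cos (y+Y)^2 * Real.sin y^2 := by ring
      _ = Real.sin y ^ 2 := by rw [hc2]; ring
  -- conclude (u/k)^2 = (v/h)^2
  have hfin : u^2 * (h:ℝ)^2 = (1 - u^2) * (k:ℝ)^2 := by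
    have h1' : (u / (k:ℝ))^2 * Real.sin y ^ 2 = (v / (h:ℝ))^2 * Real.sin y ^ 2 := by
      have := hABsq
      rw [hA, hB] at this
      calc (u / (k:ℝ))^2 * Real.sin y ^ 2 = (u / (k:ℝ) * Real.sin y)^2 := by ring
        _ = (v / (h:ℝ) * Real.sin Y)^2 := this
        _ = (v / (h:ℝ))^2 * Real.sin Y ^ 2 := by ring
        _ = (v / (h:ℝ))^2 * Real.sin y ^ 2 := by rw [hsq]
    have h2' : (u / (k:ℝ))^2 = (v / (h:ℝ))^2 :=
      mul_right_cancel₀ (pow_ne_zero 2 hsy) h1'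
    have h3' : u^2 * (h:ℝ)^2 = v^2 * (k:ℝ)^2 := by
      rw [div_pow, div_pow, div_eq_div_iff (pow_ne_zero 2 hkR) (pow_ne_zero 2 hhR)] at h2'
      linarith
    rw [← hv2]; linarith [h3']
  have hne : (h:ℝ)^2 + (k:ℝ)^2 ≠ 0 := by positivity
  have harg : (k:ℝ)^2 / ((h:ℝ)^2 + (k:ℝ)^2) = u^2 := by
    rw [div_eq_iff hne]
    linarith [hfin]
  rw [harg, Real.sqrt_sq hu0.le]
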